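/- Let G be a connected graph with pc(G) = 2 and let v be a vertex not in G. If v is joined to G by at least two edges, then the resulting graph G ∪ v satisfies pc(G ∪ v) = 2. -/

import Mathlib

open SimpleGraph

/-- An edge-coloring `c` with `k` colors is a *proper connection coloring* of `G`
if every pair of vertices is joined by a path whose consecutive edges have distinct colors. -/
def ProperConnColoring {V : Type*} (G : SimpleGraph V) {k : ℕ} (c : Sym2 V → Fin k) : Prop :=
  ∀ u v : V, ∃ p : G.Walk u v, p.IsPath ∧ (p.edges.map c).Chain' (· ≠ ·)

/-- The proper connection number of `G`. -/
noncomputable def pc {V : Type*} (G : SimpleGraph V) : ℕ :=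
  sInf {k | ∃ c : Sym2 V → Fin k, ProperConnColoring G c}

namespace PCaux

variable {V : Type*} {G : SimpleGraph V}

lemma edges_ne_nil {a b : V} (W : G.Walk a b) (hab : a ≠ b) : W.edges ≠ [] := by
  cases W with
  | nil => exact absurd rfl hab
  | cons h p => simp

lemma isPath_append {a b d : V} {p : G.Walk a b} {q : G.Walk b d} (hp : p.IsPath)
    (hq : q.IsPath) (h : ∀ x ∈ p.support, x ∈ q.support → x = b) : (p.append q).IsPath := by
  rw [Walk.isPath_def, Walk.support_append]
  refine List.Nodup.append hp.support_nodup ?_ ?_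
  · exact hq.support_nodup.sublist (List.tail_sublist _)
  · intro x hx hx'
    have hxq : x ∈ q.support := List.mem_of_mem_tail hx'
    have hxb : x = b := h x hx hxq
    subst hxb
    have : q.support = x :: q.support.tail := q.support_eq_cons
    have hnd := hq.support_nodup
    rw [this] at hnd
    exact (List.nodup_cons.mp hnd).1 hx'

/-- Split a walk at the first vertex belonging to a set `S` (the endpoint is in `S`). -/
lemma split_first {S : Set V} {a b : V} (W : G.Walk a b) (hb : b ∈ S) :
    ∃ (z : V) (W₁ : G.Walk a z) (W₂ : G.Walk z b), z ∈ S ∧ W = W₁.append W₂ ∧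
      ∀ x ∈ W₁.support, x ≠ z → x ∉ S := by
  classical
  induction W with
  | nil => exact ⟨_, Walk.nil, Walk.nil, hb, rfl, by simp⟩
  | @cons u v b h W ih =>
    by_cases hu : u ∈ S
    · exact ⟨u, Walk.nil, Walk.cons h W, hu, rfl, by simp⟩
    · obtain ⟨z, W₁, W₂, hz, hsplit, hfirst⟩ := ih hb
      refine ⟨z, Walk.cons h W₁, W₂, hz, by rw [Walk.cons_append, hsplit], ?_⟩
      intro x hx hxz
      rw [Walk.support_cons, List.mem_cons] at hx
      rcases hx with rfl | hx
      · exact hu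
      · exact hfirst x hx hxz

lemma flip_ne : (flip (· ≠ ·) : Fin 2 → Fin 2 → Prop) = (· ≠ ·) := by
  funext a b
  simp [flip, ne_comm]

end PCaux

namespace PCaux2

open PCaux

variable {V : Type*} {G : SimpleGraph V}

/-- There is a proper path (w.r.t. coloring `c`) from `u` to `w` starting with color `γ`. -/
def Good (G : SimpleGraph V) (c : Sym2 V → Fin 2) (u w : V) (γ : Fin 2) : Prop :=
  ∃ p : G.Walk u w, p.IsPath ∧ (p.edges.map c).Chain' (· ≠ ·) ∧ (p.edges.map c).head? = some γ

lemma claim {c : Sym2 V → Fin 2} (hc : ProperConnColoring G c) {u₁ u₂ : V} (h12 : u₁ ≠ u₂)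
    (P : G.Walk u₁ u₂) (hP : P.IsPath) (hPc : (P.edges.map c).Chain' (· ≠ ·))
    {γ δ : Fin 2} (hγ : (P.edges.map c).head? = some γ)
    (hδ : (P.edges.map c).getLast? = some δ)
    {w : V} (hw1 : w ≠ u₁) (hw2 : w ≠ u₂) :
    Good G c u₁ w γ ∨ Good G c u₂ w δ := by
  classical
  have hLPne : P.edges.map c ≠ [] := by simpa using edges_ne_nil P h12
  by_cases hwP : w ∈ P.support
  · -- `w` lies on `P`: take the prefix of `P` up to `w`.
    left
    have hE : (P.takeUntil w hwP).edges ++ (P.dropUntil w hwP).edges = P.edges := by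
      rw [← Walk.edges_append, Walk.take_spec]
    have hmap : ((P.takeUntil w hwP).edges.map c) ++ ((P.dropUntil w hwP).edges.map c)
        = P.edges.map c := by rw [← List.map_append, hE]
    have hPc' := hPc
    rw [← hmap] at hPc'
    have h1ne : (P.takeUntil w hwP).edges.map c ≠ [] := by
      simpa using edges_ne_nil (P.takeUntil w hwP) (Ne.symm hw1)
    refine ⟨P.takeUntil w hwP, hP.takeUntil hwP, (List.isChain_append.mp hPc').1, ?_⟩
    rw [← hmap, List.head?_append_of_ne_nil _ h1ne] at hγ
    exact hγ
  · obtain ⟨Q, hQ, hQc⟩ := hc u₂ w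
    obtain ⟨z, R₁, R₂, hzP, hsplit, hfirst⟩ :=
      split_first (S := {x | x ∈ P.support}) Q.reverse P.end_mem_support
    have hzP : z ∈ P.support := hzP
    set T := R₁.reverse with hT
    have hzw : z ≠ w := fun h => hwP (h ▸ hzP)
    have hR₁path : R₁.IsPath := by
      rw [Walk.isPath_def]
      have hnd := hQ.reverse.support_nodup
      rw [hsplit, Walk.support_append] at hnd
      exact hnd.of_append_left
    have hTpath : T.IsPath := hR₁path.reverse
    have hTsup : ∀ x ∈ T.support, x ∈ P.support → x = z := by
      intro x hx hxP
      by_contra hxz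
      exact hfirst x (by rwa [hT, Walk.support_reverse, List.mem_reverse] at hx) hxz hxP
    have hQE : Q.edges = R₂.edges.reverse ++ T.edges := by
      have h1 : Q.reverse.edges = R₁.edges ++ R₂.edges := by rw [hsplit, Walk.edges_append]
      have h2 : Q.edges = (R₁.edges ++ R₂.edges).reverse := by
        rw [← h1, Walk.edges_reverse, List.reverse_reverse]
      rw [h2, List.reverse_append, hT, Walk.edges_reverse]
    set LT := T.edges.map c with hLT
    have hQmap : Q.edges.map c = (R₂.edges.reverse.map c) ++ LT := by
      rw [hQE, List.map_append, hLT]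
    have hQc' := hQc
    rw [hQmap] at hQc'
    have hLTchain : LT.Chain' (· ≠ ·) := (List.isChain_append.mp hQc').2.1
    have hLTne : LT ≠ [] := by simpa [hLT] using edges_ne_nil T hzw
    obtain ⟨b, hb⟩ : ∃ b, LT.head? = some b := ⟨LT.head hLTne, List.head?_eq_head _⟩
    by_cases hz2 : z = u₂
    · -- `T` runs from `u₂` to `w` and meets `P` only at `u₂`.
      subst hz2
      by_cases hbδ : b = δ
      · exact Or.inr ⟨T, hTpath, hLTchain, by rw [hb, hbδ]⟩
      · left
        refine ⟨P.append T, isPath_append hP hTpath (fun x hx hx' => hTsup x hx' hx), ?_, ?_⟩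
        · rw [Walk.edges_append, List.map_append]
          refine List.isChain_append.mpr ⟨hPc, hLTchain, ?_⟩
          intro x hx y hy
          rw [hδ] at hx
          rw [hb] at hy
          simp only [Option.mem_some_iff] at hx hy
          subst hx; subst hy
          exact fun h => hbδ h.symm
        · rw [Walk.edges_append, List.map_append, List.head?_append_of_ne_nil _ hLPne]
          exact hγ
    by_cases hz1 : z = u₁
    · subst hz1
      by_cases hbγ : b = γ
      · exact Or.inl ⟨T, hTpath, hLTchain, by rw [hb, hbγ]⟩
      · right
        refine ⟨P.reverse.append T, isPath_append hP.reverse hTpath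
          (fun x hx hx' => hTsup x hx' (by rwa [Walk.support_reverse, List.mem_reverse] at hx)),
          ?_, ?_⟩
        · rw [Walk.edges_append, List.map_append, Walk.edges_reverse, List.map_reverse]
          refine List.isChain_append.mpr ⟨?_, hLTchain, ?_⟩
          · exact List.isChain_reverse.mpr (List.IsChain.imp (fun _ _ h => Ne.symm h) hPc)
          · intro x hx y hy
            rw [List.getLast?_reverse, hγ] at hx
            rw [hb] at hy
            simp only [Option.mem_some_iff] at hx hy
            subst hx; subst hy
            exact fun h => hbγ h.symm
        · rw [Walk.edges_append, List.map_append, Walk.edges_reverse, List.map_reverse,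
            List.head?_append_of_ne_nil _ (by simpa using hLPne), List.head?_reverse]
          exact hδ
    · -- `z` is an interior vertex of `P`.
      have hE : (P.takeUntil z hzP).edges ++ (P.dropUntil z hzP).edges = P.edges := by
        rw [← Walk.edges_append, Walk.take_spec]
      set L₁ := (P.takeUntil z hzP).edges.map c with hL₁
      set L₂ := (P.dropUntil z hzP).edges.map c with hL₂
      have hmap : L₁ ++ L₂ = P.edges.map c := by rw [hL₁, hL₂, ← List.map_append, hE]
      have hL₁ne : L₁ ≠ [] := by
        simpa [hL₁] using edges_ne_nil (P.takeUntil z hzP) (fun h => hz1 h.symm)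
      have hL₂ne : L₂ ≠ [] := by
        simpa [hL₂] using edges_ne_nil (P.dropUntil z hzP) hz2
      have hPc' := hPc
      rw [← hmap] at hPc'
      obtain ⟨hch₁, hch₂, hJ⟩ := List.isChain_append.mp hPc'
      obtain ⟨a, ha⟩ : ∃ a, L₁.getLast? = some a := ⟨L₁.getLast hL₁ne, List.getLast?_eq_getLast _⟩
      obtain ⟨a₂, ha₂⟩ : ∃ a₂, L₂.head? = some a₂ := ⟨L₂.head hL₂ne, List.head?_eq_head _⟩
      have haa₂ : a ≠ a₂ := hJ a (by rw [ha]; rfl) a₂ (by rw [ha₂]; rfl)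
      have hγ' : L₁.head? = some γ := by
        rw [← hmap, List.head?_append_of_ne_nil _ hL₁ne] at hγ; exact hγ
      have hδ' : L₂.getLast? = some δ := by
        rw [← hmap, List.getLast?_append_of_ne_nil _ hL₂ne] at hδ; exact hδ
      by_cases hab : a = b
      · right
        refine ⟨(P.dropUntil z hzP).reverse.append T,
          isPath_append (hP.dropUntil hzP).reverse hTpath (fun x hx hx' => hTsup x hx'
            (P.support_dropUntil_subset hzP
              (by rwa [Walk.support_reverse, List.mem_reverse] at hx))), ?_, ?_⟩
        · rw [Walk.edges_append, List.map_append, Walk.edges_reverse, List.map_reverse]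
          refine List.isChain_append.mpr ⟨?_, hLTchain, ?_⟩
          · exact List.isChain_reverse.mpr (List.IsChain.imp (fun _ _ h => Ne.symm h) hch₂)
          · intro x hx y hy
            rw [List.getLast?_reverse, ha₂] at hx
            rw [hb] at hy
            simp only [Option.mem_some_iff] at hx hy
            subst hx; subst hy
            exact fun h => haa₂ (hab ▸ h.symm)
        · rw [Walk.edges_append, List.map_append, Walk.edges_reverse, List.map_reverse,
            List.head?_append_of_ne_nil _ (by rw [ne_eq, List.reverse_eq_nil_iff]; exact hL₂ne),
            List.head?_reverse]
          exact hδ'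
      · left
        refine ⟨(P.takeUntil z hzP).append T,
          isPath_append (hP.takeUntil hzP) hTpath (fun x hx hx' => hTsup x hx'
            (P.support_takeUntil_subset hzP hx)), ?_, ?_⟩
        · rw [Walk.edges_append, List.map_append]
          refine List.isChain_append.mpr ⟨hch₁, hLTchain, ?_⟩
          intro x hx y hy
          rw [ha] at hx
          rw [hb] at hy
          simp only [Option.mem_some_iff] at hx hy
          subst hx; subst hy
          exact hab
        · rw [Walk.edges_append, List.map_append, List.head?_append_of_ne_nil _ hL₁ne]
          exact hγ'

end PCaux2

/-- Adding a new vertex `v` joined by at least two edges to a connected graph `G`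
with `pc(G) = 2` yields a graph with proper connection number 2. -/
theorem pc_add_vertex {V : Type*} (G : SimpleGraph V) (hG : G.Connected)
    (hpc : pc G = 2) (G' : SimpleGraph (Option V))
    (hsub : ∀ a b : V, G'.Adj (some a) (some b) ↔ G.Adj a b)
    (hdeg : 2 ≤ ({w | G'.Adj none w} : Set (Option V)).ncard) :
    pc G' = 2 := by
  classical
  have hpc' : sInf {k | ∃ c : Sym2 V → Fin k, ProperConnColoring G c} = 2 := hpc
  -- The set of feasible numbers of colors for `G` is nonempty, so its infimum `2` is a member.
  have hSne : {k | ∃ c : Sym2 V → Fin k, ProperConnColoring G c}.Nonempty := by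
    by_contra h
    rw [Set.not_nonempty_iff_eq_empty] at h
    rw [h, Nat.sInf_empty] at hpc'
    omega
  have h2S : 2 ∈ {k | ∃ c : Sym2 V → Fin k, ProperConnColoring G c} := by
    rw [← hpc']; exact Nat.sInf_mem hSne
  obtain ⟨c, hcG⟩ := h2S
  -- `G` is not complete, since one color does not suffice.
  have h1S : (1 : ℕ) ∉ {k | ∃ c : Sym2 V → Fin k, ProperConnColoring G c} := by
    intro h
    have := Nat.sInf_le h
    omega
  have hnc : ∃ a b : V, a ≠ b ∧ ¬ G.Adj a b := by
    by_contra h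
    push_neg at h
    apply h1S
    refine ⟨fun _ => 0, fun u v => ?_⟩
    by_cases huv : u = v
    · subst huv; exact ⟨Walk.nil, Walk.IsPath.nil, by simp [List.Chain']⟩
    · refine ⟨Walk.cons (h u v huv) Walk.nil, ?_, by simp [List.Chain']⟩
      rw [Walk.cons_isPath_iff]
      exact ⟨Walk.IsPath.nil, by simp [huv]⟩
  obtain ⟨a₀, b₀, hab, hnadj⟩ := hnc
  -- Two distinct neighbors of the new vertex.
  have hfin : ({w | G'.Adj none w} : Set (Option V)).Finite := by
    by_contra h
    rw [(Set.not_infinite.not_right.mpr h).ncard] at hdeg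
    omega
  obtain ⟨x₁, x₂, hx₁, hx₂, hx12⟩ := (Set.one_lt_ncard_iff hfin).mp (by omega)
  obtain ⟨u₁, rfl⟩ : ∃ u, x₁ = some u := by
    cases x₁ with
    | none => exact absurd rfl (hx₁ : G'.Adj none none).ne
    | some u => exact ⟨u, rfl⟩
  obtain ⟨u₂, rfl⟩ : ∃ u, x₂ = some u := by
    cases x₂ with
    | none => exact absurd rfl (hx₂ : G'.Adj none none).ne
    | some u => exact ⟨u, rfl⟩
  have hA1 : G'.Adj none (some u₁) := hx₁
  have hA2 : G'.Adj none (some u₂) := hx₂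
  have h12 : u₁ ≠ u₂ := fun h => hx12 (by rw [h])
  -- A proper path between the two neighbors, with its first and last colors.
  obtain ⟨P, hP, hPch⟩ := hcG u₁ u₂
  have hPE : P.edges.map c ≠ [] := by simpa using PCaux.edges_ne_nil P h12
  obtain ⟨γ, hγ⟩ : ∃ γ, (P.edges.map c).head? = some γ :=
    ⟨(P.edges.map c).head hPE, List.head?_eq_head _⟩
  obtain ⟨δ, hδ⟩ : ∃ δ, (P.edges.map c).getLast? = some δ :=
    ⟨(P.edges.map c).getLast hPE, List.getLast?_eq_getLast _⟩
  -- The coloring of `G'`.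
  set d : V → Fin 2 := fun u => if u = u₁ then γ + 1 else δ + 1 with hd
  set f : Option V → Option V → Fin 2 := fun x y =>
    match x, y with
    | some a, some b => c s(a, b)
    | none, some u => d u
    | some u, none => d u
    | none, none => 0 with hfdef
  have hf : ∀ x y, f x y = f y x := by
    intro x y
    cases x <;> cases y <;> (try rfl)
    show c _ = c _
    rw [Sym2.eq_swap]
  set c2 : Sym2 (Option V) → Fin 2 := Sym2.lift ⟨f, hf⟩ with hc2
  have hc2ss : ∀ a b : V, c2 s(some a, some b) = c s(a, b) := fun a b => rfl
  have hc2n1 : c2 s(none, some u₁) = γ + 1 := by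
    show d u₁ = γ + 1
    rw [hd]; simp
  have hc2n2 : c2 s(none, some u₂) = δ + 1 := by
    show d u₂ = δ + 1
    rw [hd]; simp [h12.symm]
  have hfin2 : ∀ x : Fin 2, x + 1 ≠ x := by decide
  -- Lifting walks of `G` to `G'`.
  let F : G →g G' := ⟨some, fun {x y} h => (hsub x y).mpr h⟩
  have hmapcol : ∀ {x y : V} (p : G.Walk x y), (p.map F).edges.map c2 = p.edges.map c := by
    intro x y p
    rw [Walk.edges_map, List.map_map]
    refine List.map_congr_left ?_
    intro e _
    induction e using Sym2.ind with
    | _ x y => exact hc2ss x y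
  have hlift : ∀ (u : V) (α : Fin 2), G'.Adj none (some u) → c2 s(none, some u) = α + 1 →
      ∀ w : V, PCaux2.Good G c u w α →
      ∃ p : G'.Walk none (some w), p.IsPath ∧ (p.edges.map c2).Chain' (· ≠ ·) := by
    rintro u α hadj hcol w ⟨p, hp, hpch, hph⟩
    refine ⟨Walk.cons hadj (p.map F), ?_, ?_⟩
    · rw [Walk.cons_isPath_iff]
      refine ⟨Walk.map_isPath_of_injective (Option.some_injective V) hp, ?_⟩
      rw [Walk.support_map]
      simp
    · rw [Walk.edges_cons, List.map_cons, hmapcol p]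
      refine List.isChain_cons.mpr ⟨?_, hpch⟩
      intro y hy
      rw [hph] at hy
      simp only [Option.mem_some_iff] at hy
      subst hy
      rw [hcol]
      exact hfin2 α
  -- A proper path from the new vertex to any old vertex.
  have hmain : ∀ w : V, ∃ p : G'.Walk none (some w),
      p.IsPath ∧ (p.edges.map c2).Chain' (· ≠ ·) := by
    intro w
    by_cases hw1 : w = u₁
    · subst hw1
      refine ⟨Walk.cons hA1 Walk.nil, ?_, by simp [List.Chain']⟩
      rw [Walk.cons_isPath_iff]
      exact ⟨Walk.IsPath.nil, by simp⟩
    by_cases hw2 : w = u₂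
    · subst hw2
      refine ⟨Walk.cons hA2 Walk.nil, ?_, by simp [List.Chain']⟩
      rw [Walk.cons_isPath_iff]
      exact ⟨Walk.IsPath.nil, by simp⟩
    rcases PCaux2.claim hcG h12 P hP hPch hγ hδ hw1 hw2 with hg | hg
    · exact hlift u₁ γ hA1 hc2n1 w hg
    · exact hlift u₂ δ hA2 hc2n2 w hg
  have hrev : ∀ {x y : Option V},
      (∃ p : G'.Walk x y, p.IsPath ∧ (p.edges.map c2).Chain' (· ≠ ·)) →
      ∃ p : G'.Walk y x, p.IsPath ∧ (p.edges.map c2).Chain' (· ≠ ·) := by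
    rintro x y ⟨p, h1, h2⟩
    refine ⟨p.reverse, h1.reverse, ?_⟩
    rw [Walk.edges_reverse, List.map_reverse]
    exact List.isChain_reverse.mpr (List.IsChain.imp (fun _ _ h => Ne.symm h) h2)
  have hPCC : ProperConnColoring G' c2 := by
    intro x y
    match x, y with
    | none, none => exact ⟨Walk.nil, Walk.IsPath.nil, by simp [List.Chain']⟩
    | none, some w => exact hmain w
    | some w, none => exact hrev (hmain w)
    | some a, some b =>
      obtain ⟨p, hp, hpch⟩ := hcG a b
      exact ⟨p.map F, Walk.map_isPath_of_injective (Option.some_injective V) hp,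
        by rw [hmapcol]; exact hpch⟩
  -- Conclude.
  have h2' : 2 ∈ {k | ∃ c' : Sym2 (Option V) → Fin k, ProperConnColoring G' c'} := ⟨c2, hPCC⟩
  have hlb : ∀ k ∈ {k | ∃ c' : Sym2 (Option V) → Fin k, ProperConnColoring G' c'}, 2 ≤ k := by
    rintro k ⟨cc, hcc⟩
    by_contra hk
    interval_cases k
    · exact (cc s(none, none)).elim0
    · obtain ⟨p, hp, hpch⟩ := hcc (some a₀) (some b₀)
      match hE : p.edges with
      | [] =>
        have h0 : p.length = 0 := by rw [← Walk.length_edges, hE]; rfl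
        exact hab (Option.some_injective V (Walk.eq_of_length_eq_zero h0))
      | [e] =>
        have h1 : p.length = 1 := by rw [← Walk.length_edges, hE]; rfl
        exact hnadj ((hsub a₀ b₀).mp (Walk.adj_of_length_eq_one h1))
      | e₁ :: e₂ :: l =>
        rw [hE] at hpch
        simp only [List.Chain', List.map_cons, List.isChain_cons_cons] at hpch
        exact hpch.1 (Subsingleton.elim _ _)
  have hub : pc G' ≤ 2 := Nat.sInf_le h2'
  have hlb' : 2 ≤ pc G' := hlb _ (Nat.sInf_mem ⟨2, h2'⟩)
  omega
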